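/- Let x be k-sparse, 1 < q < ∞, and suppose ‖Aᵀw‖_∞ ≤ λσ where y = Ax + w. If x̂ solves the Dantzig selector min ‖z‖₁ s.t. ‖Aᵀ(y − Az)‖_∞ ≤ λσ, then ‖x̂ − x‖_q ≤ 4 k^{1−1/q} λσ / ρ_{q, 2^{q/(q−1)}k}(A)² and ‖x̂ − x‖₁ ≤ 8 k^{2−2/q} λσ / ρ_{q, 2^{q/(q−1)}k}(A)², provided ρ_{q, 2^{q/(q−1)}k}(A) > 0. -/

import Mathlib

open Finset Matrix

noncomputable def l1 {N : ℕ} (z : Fin N → ℝ) : ℝ := ∑ i, |z i|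
noncomputable def lq {N : ℕ} (q : ℝ) (z : Fin N → ℝ) : ℝ := (∑ i, |z i| ^ q) ^ (1/q)
noncomputable def l2 {m : ℕ} (v : Fin m → ℝ) : ℝ := Real.sqrt (∑ i, (v i)^2)
noncomputable def linf {N : ℕ} (z : Fin N → ℝ) : ℝ := ⨆ i, |z i|
open scoped Classical in
noncomputable def l0 {N : ℕ} (z : Fin N → ℝ) : ℕ := (Finset.univ.filter (fun i => z i ≠ 0)).card
noncomputable def sparsityQ {N : ℕ} (q : ℝ) (z : Fin N → ℝ) : ℝ := (l1 z / lq q z) ^ (q/(q-1))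
noncomputable def cmsv {m N : ℕ} (q s : ℝ) (A : Matrix (Fin m) (Fin N) ℝ) : ℝ :=
  sInf { r | ∃ z : Fin N → ℝ, z ≠ 0 ∧ sparsityQ q z ≤ s ∧ r = l2 (A.mulVec z) / lq q z }

theorem stmt13 {m N k : ℕ} (A : Matrix (Fin m) (Fin N) ℝ)
    (x xh : Fin N → ℝ) (w y : Fin m → ℝ) (lam : ℝ) (hlam : 0 < lam)
    (hy : y = A.mulVec x + w) (hw : linf (A.transpose.mulVec w) ≤ lam)
    (hx : l0 x ≤ k) (q : ℝ) (hq : 1 < q)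
    (hfeas : linf (A.transpose.mulVec (y - A.mulVec xh)) ≤ lam)
    (hmin : ∀ z : Fin N → ℝ,
      linf (A.transpose.mulVec (y - A.mulVec z)) ≤ lam → l1 xh ≤ l1 z)
    (hρ : 0 < cmsv q ((2:ℝ) ^ (q/(q-1)) * (k : ℝ)) A) :
    lq q (xh - x) ≤ 4 * (k : ℝ) ^ (1 - 1/q) * lam /
        (cmsv q ((2:ℝ) ^ (q/(q-1)) * (k : ℝ)) A) ^ 2 ∧
      l1 (xh - x) ≤ 8 * (k : ℝ) ^ (2 - 2/q) * lam /
        (cmsv q ((2:ℝ) ^ (q/(q-1)) * (k : ℝ)) A) ^ 2 := by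
  classical
  have hq0 : (0:ℝ) < q := lt_trans one_pos hq
  have hq1 : (0:ℝ) < 1/q := by positivity
  have hqm1 : (0:ℝ) < q - 1 := by linarith
  have ha : (0:ℝ) < 1 - 1/q := by
    have : 1/q < 1 := by rw [div_lt_one hq0]; exact hq
    linarith
  set ρ := cmsv q ((2:ℝ) ^ (q/(q-1)) * (k : ℝ)) A with hρdef
  set h : Fin N → ℝ := xh - x with hh
  by_cases hc : h = 0
  · have h0 : lq q h = 0 := by
      rw [hc]
      simp only [lq, Pi.zero_apply, abs_zero, Real.zero_rpow hq0.ne',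
        Finset.sum_const, smul_zero]
      rw [one_div, Real.zero_rpow (inv_ne_zero hq0.ne')]
    have h1 : l1 h = 0 := by simp [l1, hc]
    constructor
    · rw [h0]
      apply div_nonneg _ (sq_nonneg _)
      have : (0:ℝ) ≤ (k:ℝ) ^ (1 - 1/q) := Real.rpow_nonneg (Nat.cast_nonneg k) _
      positivity
    · rw [h1]
      apply div_nonneg _ (sq_nonneg _)
      have : (0:ℝ) ≤ (k:ℝ) ^ (2 - 2/q) := Real.rpow_nonneg (Nat.cast_nonneg k) _
      positivity
  -- main case
  set S : Finset (Fin N) := Finset.univ.filter (fun i => x i ≠ 0) with hSdef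
  have hScard : (S.card : ℝ) ≤ (k:ℝ) := by
    have : S.card = l0 x := by simp [l0, hSdef]
    exact_mod_cast this ▸ Nat.cast_le.mpr hx
  have hxh : ∀ i, xh i = x i + h i := by intro i; simp [hh]
  -- x is feasible
  have hxfeas : l1 xh ≤ l1 x := by
    apply hmin
    have : y - A.mulVec x = w := by rw [hy]; abel
    rw [this]; exact hw
  -- cone condition
  set T : Finset (Fin N) := Finset.univ.filter (fun i => ¬ x i ≠ 0) with hTdef
  have hsplit : ∀ z : Fin N → ℝ, l1 z = ∑ i ∈ S, |z i| + ∑ i ∈ T, |z i| := by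
    intro z
    rw [l1, ← Finset.sum_filter_add_sum_filter_not Finset.univ (fun i => x i ≠ 0)]
  have hT0 : ∀ i ∈ T, x i = 0 := by
    intro i hi
    simp [hTdef] at hi; exact hi
  have hcone : ∑ i ∈ T, |h i| ≤ ∑ i ∈ S, |h i| := by
    have e1 : ∑ i ∈ T, |xh i| = ∑ i ∈ T, |h i| := by
      apply Finset.sum_congr rfl
      intro i hi; rw [hxh i, hT0 i hi, zero_add]
    have e2 : ∑ i ∈ T, |x i| = 0 := by
      apply Finset.sum_eq_zero; intro i hi; rw [hT0 i hi, abs_zero]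
    have e3 : ∑ i ∈ S, |x i| ≤ ∑ i ∈ S, |xh i| + ∑ i ∈ S, |h i| := by
      rw [← Finset.sum_add_distrib]
      apply Finset.sum_le_sum
      intro i _
      have : |x i| = |xh i + -(h i)| := by rw [hxh i]; ring_nf
      rw [this]
      calc |xh i + -(h i)| ≤ |xh i| + |(-(h i))| := abs_add_le _ _
        _ = |xh i| + |h i| := by rw [abs_neg]
    have := hsplit xh
    have := hsplit x
    linarith [hxfeas, hsplit xh, hsplit x]
  have hL1split : l1 h = ∑ i ∈ S, |h i| + ∑ i ∈ T, |h i| := hsplit h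
  -- Hölder on S
  have hpq : Real.HolderConjugate q (q/(q-1)) := Real.HolderConjugate.conjExponent hq
  have hholder : ∑ i ∈ S, |h i| ≤ (k:ℝ) ^ (1 - 1/q) * lq q h := by
    have H := Real.inner_le_Lp_mul_Lq_of_nonneg S hpq
      (f := fun i => |h i|) (g := fun _ => (1:ℝ))
      (fun i _ => abs_nonneg _) (fun i _ => zero_le_one)
    simp only [mul_one, Real.one_rpow, Finset.sum_const, nsmul_eq_mul] at H
    have hexp : 1 / (q/(q-1)) = 1 - 1/q := by field_simp
    rw [hexp] at H
    have h1 : (∑ i ∈ S, |h i| ^ q) ^ (1/q) ≤ lq q h := by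
      apply Real.rpow_le_rpow (Finset.sum_nonneg fun i _ => Real.rpow_nonneg (abs_nonneg _) _)
        _ hq1.le
      apply Finset.sum_le_sum_of_subset_of_nonneg (Finset.subset_univ S)
      intro i _ _; exact Real.rpow_nonneg (abs_nonneg _) _
    have h2 : ((S.card : ℝ)) ^ (1 - 1/q) ≤ (k:ℝ) ^ (1 - 1/q) := by
      apply Real.rpow_le_rpow (Nat.cast_nonneg _) hScard
      have : 1/q < 1 := by rw [div_lt_one hq0]; exact hq
      linarith
    calc ∑ i ∈ S, |h i| ≤ (∑ i ∈ S, |h i| ^ q) ^ (1/q) * (S.card : ℝ) ^ (1 - 1/q) := H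
      _ ≤ lq q h * (k:ℝ) ^ (1 - 1/q) := by
          apply mul_le_mul h1 h2 (Real.rpow_nonneg (Nat.cast_nonneg _) _)
          exact Real.rpow_nonneg (Finset.sum_nonneg fun i _ =>
            Real.rpow_nonneg (abs_nonneg _) _) _
      _ = (k:ℝ) ^ (1 - 1/q) * lq q h := mul_comm _ _
  have hL : l1 h ≤ 2 * (k:ℝ) ^ (1 - 1/q) * lq q h := by
    rw [hL1split]
    calc ∑ i ∈ S, |h i| + ∑ i ∈ T, |h i| ≤ 2 * ∑ i ∈ S, |h i| := by linarith
      _ ≤ 2 * ((k:ℝ) ^ (1 - 1/q) * lq q h) := by linarith [hholder]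
      _ = 2 * (k:ℝ) ^ (1 - 1/q) * lq q h := by ring
  -- positivity facts
  have hLqpos : 0 < lq q h := by
    obtain ⟨i, hi⟩ := Function.ne_iff.mp hc
    apply Real.rpow_pos_of_pos _ _
    apply Finset.sum_pos' (fun j _ => Real.rpow_nonneg (abs_nonneg _) _)
    exact ⟨i, Finset.mem_univ i, Real.rpow_pos_of_pos (abs_pos.mpr hi) _⟩
  have hL1pos : 0 < l1 h := by
    obtain ⟨i, hi⟩ := Function.ne_iff.mp hc
    apply Finset.sum_pos' (fun j _ => abs_nonneg _)
    exact ⟨i, Finset.mem_univ i, abs_pos.mpr hi⟩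
  have hKpos : (0:ℝ) < (k:ℝ) := by
    rcases Nat.eq_zero_or_pos k with hk | hk
    · exfalso
      rw [hk] at hL
      rw [Nat.cast_zero, Real.zero_rpow ha.ne'] at hL
      nlinarith
    · exact_mod_cast hk
  have hKa : (0:ℝ) < (k:ℝ) ^ (1 - 1/q) := Real.rpow_pos_of_pos hKpos _
  -- sparsity bound
  have hsp : sparsityQ q h ≤ (2:ℝ) ^ (q/(q-1)) * (k:ℝ) := by
    rw [sparsityQ]
    have hdiv : l1 h / lq q h ≤ 2 * (k:ℝ) ^ (1 - 1/q) := by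
      rw [div_le_iff₀ hLqpos]; linarith [hL]
    have he : (0:ℝ) ≤ q/(q-1) := by positivity
    calc (l1 h / lq q h) ^ (q/(q-1)) ≤ (2 * (k:ℝ) ^ (1 - 1/q)) ^ (q/(q-1)) :=
          Real.rpow_le_rpow (div_nonneg hL1pos.le hLqpos.le) hdiv he
      _ = (2:ℝ) ^ (q/(q-1)) * ((k:ℝ) ^ (1 - 1/q)) ^ (q/(q-1)) :=
          Real.mul_rpow (by norm_num) hKa.le
      _ = (2:ℝ) ^ (q/(q-1)) * (k:ℝ) := by
          rw [← Real.rpow_mul hKpos.le,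
            show (1 - 1/q) * (q/(q-1)) = 1 by field_simp, Real.rpow_one]
  -- cmsv bound
  have hratio : ρ ≤ l2 (A.mulVec h) / lq q h := by
    apply csInf_le
    · refine ⟨0, fun r hr => ?_⟩
      obtain ⟨z, hz, hsz, rfl⟩ := hr
      apply div_nonneg (Real.sqrt_nonneg _)
      exact Real.rpow_nonneg (Finset.sum_nonneg fun i _ =>
        Real.rpow_nonneg (abs_nonneg _) _) _
    · exact ⟨h, hc, hsp, rfl⟩
  have hAh : ρ * lq q h ≤ l2 (A.mulVec h) := (le_div_iff₀ hLqpos).mp hratio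
  -- quadratic bound
  have hsq : (l2 (A.mulVec h))^2 = ∑ j, (A.mulVec h j)^2 :=
    Real.sq_sqrt (Finset.sum_nonneg fun j _ => sq_nonneg _)
  set u : Fin N → ℝ := A.transpose.mulVec (A.mulVec h) with hu
  have hdot : ∑ j, (A.mulVec h j)^2 = ∑ i, h i * u i := by
    have : ∑ i, h i * u i = h ⬝ᵥ u := rfl
    rw [this, hu, Matrix.dotProduct_mulVec, Matrix.vecMul_transpose]
    simp [dotProduct, sq]
  have hulinf : ∀ i, |u i| ≤ 2 * lam := by
    intro i
    have hwy : y - A.mulVec x = w := by rw [hy]; abel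
    have hAmul : A.mulVec h = w - (y - A.mulVec xh) := by
      rw [hh, Matrix.mulVec_sub, hy]; abel
    have huexp : u = A.transpose.mulVec w - A.transpose.mulVec (y - A.mulVec xh) := by
      rw [hu, hAmul, Matrix.mulVec_sub]
    have b1 : |A.transpose.mulVec w i| ≤ lam := by
      refine le_trans ?_ hw
      simp only [linf]
      exact le_ciSup (f := fun j => |A.transpose.mulVec w j|)
        (Set.Finite.bddAbove (Set.finite_range _)) i
    have b2 : |A.transpose.mulVec (y - A.mulVec xh) i| ≤ lam := by
      refine le_trans ?_ hfeas
      simp only [linf]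
      exact le_ciSup (f := fun j => |A.transpose.mulVec (y - A.mulVec xh) j|)
        (Set.Finite.bddAbove (Set.finite_range _)) i
    rw [huexp]
    calc |(A.transpose.mulVec w - A.transpose.mulVec (y - A.mulVec xh)) i|
        = |A.transpose.mulVec w i - A.transpose.mulVec (y - A.mulVec xh) i| := rfl
      _ ≤ |A.transpose.mulVec w i| + |A.transpose.mulVec (y - A.mulVec xh) i| := by
          rw [sub_eq_add_neg]
          exact (abs_add_le _ _).trans (by rw [abs_neg])
      _ ≤ 2 * lam := by linarith
  have hquad : (l2 (A.mulVec h))^2 ≤ 2 * lam * l1 h := by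
    rw [hsq, hdot]
    calc ∑ i, h i * u i ≤ ∑ i, |h i| * (2 * lam) := by
          apply Finset.sum_le_sum
          intro i _
          calc h i * u i ≤ |h i * u i| := le_abs_self _
            _ = |h i| * |u i| := abs_mul _ _
            _ ≤ |h i| * (2 * lam) := mul_le_mul_of_nonneg_left (hulinf i) (abs_nonneg _)
      _ = 2 * lam * l1 h := by rw [← Finset.sum_mul, l1]; ring
  -- combine
  have hkey : ρ^2 * lq q h ≤ 4 * (k:ℝ) ^ (1 - 1/q) * lam := by
    have h1 : (ρ * lq q h)^2 ≤ (l2 (A.mulVec h))^2 := by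
      apply pow_le_pow_left₀ (mul_nonneg hρ.le hLqpos.le) hAh
    have h2 : (l2 (A.mulVec h))^2 ≤ 2 * lam * (2 * (k:ℝ) ^ (1 - 1/q) * lq q h) := by
      calc (l2 (A.mulVec h))^2 ≤ 2 * lam * l1 h := hquad
        _ ≤ 2 * lam * (2 * (k:ℝ) ^ (1 - 1/q) * lq q h) := by
            apply mul_le_mul_of_nonneg_left hL (by linarith)
    refine le_of_mul_le_mul_right ?_ hLqpos
    nlinarith [h1, h2]
  have hρ2 : (0:ℝ) < ρ^2 := by positivity
  have first : lq q h ≤ 4 * (k:ℝ) ^ (1 - 1/q) * lam / ρ^2 := by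
    rw [le_div_iff₀ hρ2, mul_comm]
    exact hkey
  refine ⟨first, ?_⟩
  have hKaa : (k:ℝ) ^ (2 - 2/q) = (k:ℝ) ^ (1 - 1/q) * (k:ℝ) ^ (1 - 1/q) := by
    rw [← Real.rpow_add hKpos]
    ring_nf
  calc l1 h ≤ 2 * (k:ℝ) ^ (1 - 1/q) * lq q h := hL
    _ ≤ 2 * (k:ℝ) ^ (1 - 1/q) * (4 * (k:ℝ) ^ (1 - 1/q) * lam / ρ^2) := by
        apply mul_le_mul_of_nonneg_left first (by positivity)
    _ = 8 * (k:ℝ) ^ (2 - 2/q) * lam / ρ^2 := by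
        rw [hKaa]; ring
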